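/- Let a_0, a_1, a_2 be nonnegative integers with a_1 ≥ a_0 + a_2, and define d(r_1, r_2) = r_1(a_0 + a_1) + r_2(a_1 + a_2) − r_1² − r_2² − r_1 r_2. Then the unique maximizer of d over the feasible region {(r_1, r_2) ∈ ℤ_{≥0}² : r_1 ≤ a_0, r_2 ≤ a_2, r_1 + r_2 ≤ a_1} is (r_1, r_2) = (a_0, a_2), which yields Betti numbers (β_0, β_1, β_2) = (0, a_1 − a_0 − a_2, 0). -/
import Mathlib


/-- The dimension of the variety of length-2 chain complexes with ranks `(r₁, r₂)`. -/
def d2 (a₀ a₁ a₂ : ℕ) (r : ℤ × ℤ) : ℤ :=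
  r.1 * (a₀ + a₁) + r.2 * (a₁ + a₂) - r.1 ^ 2 - r.2 ^ 2 - r.1 * r.2

/-- Feasibility of the rank vector `(r₁, r₂)`. -/
def feas2 (a₀ a₁ a₂ : ℕ) (r : ℤ × ℤ) : Prop :=
  0 ≤ r.1 ∧ 0 ≤ r.2 ∧ r.1 ≤ a₀ ∧ r.2 ≤ a₂ ∧ r.1 + r.2 ≤ a₁

/-- If `a₁ ≥ a₀ + a₂`, the unique maximizer of `d2` over the feasible region is
`(a₀, a₂)`, yielding Betti numbers `(0, a₁ - a₀ - a₂, 0)`. -/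
theorem stmt4 (a₀ a₁ a₂ : ℕ) (h : a₀ + a₂ ≤ a₁) :
    feas2 a₀ a₁ a₂ ((a₀ : ℤ), (a₂ : ℤ)) ∧
    (∀ r : ℤ × ℤ, feas2 a₀ a₁ a₂ r →
      d2 a₀ a₁ a₂ r ≤ d2 a₀ a₁ a₂ ((a₀ : ℤ), (a₂ : ℤ))) ∧
    (∀ r : ℤ × ℤ, feas2 a₀ a₁ a₂ r →
      d2 a₀ a₁ a₂ r = d2 a₀ a₁ a₂ ((a₀ : ℤ), (a₂ : ℤ)) → r = ((a₀ : ℤ), (a₂ : ℤ))) ∧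
    (((a₀ : ℤ) - a₀, (a₁ : ℤ) - a₀ - a₂, (a₂ : ℤ) - a₂) =
      ((0 : ℤ), (a₁ : ℤ) - a₀ - a₂, (0 : ℤ))) := by
  have h' : (a₀ : ℤ) + a₂ ≤ a₁ := by exact_mod_cast h
  refine ⟨⟨by positivity, by positivity, le_refl _, le_refl _, h'⟩, ?_, ?_, by ring_nf⟩
  · rintro ⟨r₁, r₂⟩ ⟨h1, h2, h3, h4, h5⟩
    simp only [d2]
    nlinarith [sq_nonneg ((a₀ : ℤ) - r₁), sq_nonneg ((a₂ : ℤ) - r₂),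
      mul_nonneg (sub_nonneg.2 h3) (sub_nonneg.2 h4)]
  · rintro ⟨r₁, r₂⟩ ⟨h1, h2, h3, h4, h5⟩ heq
    simp only [d2] at heq
    have e1 : r₁ = (a₀ : ℤ) := by
      nlinarith [sq_nonneg ((a₀ : ℤ) - r₁), sq_nonneg ((a₂ : ℤ) - r₂),
        mul_nonneg (sub_nonneg.2 h3) (sub_nonneg.2 h4)]
    have e2 : r₂ = (a₂ : ℤ) := by
      nlinarith [sq_nonneg ((a₀ : ℤ) - r₁), sq_nonneg ((a₂ : ℤ) - r₂),
        mul_nonneg (sub_nonneg.2 h3) (sub_nonneg.2 h4)]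
    simp [e1, e2]
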